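/- For every integer ν ≥ 2, the ν-th central moment of a Poisson random variable with mean λ has the form μ_ν(λ) = ν! Σ_{l=1}^{⌊ν/2⌋} c_{l,ν} λ^l, where the coefficients c_{l,ν} are positive rational numbers independent of λ and c_{l,ν} < 1/l! for all l = 1, ..., ⌊ν/2⌋. -/

import Mathlib

open Real Finset

/-- The `ν`-th central moment of a Poisson random variable with mean `lam`. -/
noncomputable def poissonCentralMoment (ν : ℕ) (lam : ℝ) : ℝ :=
  ∑' k : ℕ, (Real.exp (-lam) * lam ^ k / Nat.factorial k) * ((k : ℝ) - lam) ^ ν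

lemma exp_tsum (lam : ℝ) : ∑' k : ℕ, lam ^ k / (Nat.factorial k : ℝ) = Real.exp lam := by
  rw [Real.exp_eq_exp_ℝ, NormedSpace.exp_eq_tsum ℝ]
  congr 1; ext n
  rw [smul_eq_mul]; ring

lemma myabs (lam : ℝ) (hl : 0 ≤ lam) (k : ℕ) : |(k:ℝ) - lam| ≤ (1+lam) * 2^k := by
  have h2 : ((k:ℝ)) + 1 ≤ 2^k := by exact_mod_cast Nat.lt_two_pow_self (n := k)
  rw [abs_sub_le_iff]
  constructor <;> nlinarith [Nat.cast_nonneg (α := ℝ) k]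

lemma summable_f (lam : ℝ) (hl : 0 ≤ lam) (ν : ℕ) :
    Summable (fun k : ℕ => (Real.exp (-lam) * lam ^ k / Nat.factorial k) * ((k : ℝ) - lam) ^ ν) := by
  apply Summable.of_norm
  refine Summable.of_nonneg_of_le (fun k => norm_nonneg _) ?_
    (((Real.summable_pow_div_factorial (lam * 2^ν)).mul_left (Real.exp (-lam) * (1+lam)^ν)))
  · intro k
    rw [Real.norm_eq_abs, abs_mul, abs_pow]
    have hw : |Real.exp (-lam) * lam ^ k / Nat.factorial k|
        = Real.exp (-lam) * lam ^ k / Nat.factorial k := by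
      rw [abs_of_nonneg]; positivity
    rw [hw]
    have hb : |(k:ℝ) - lam| ^ ν ≤ ((1+lam) * 2^k) ^ ν :=
      pow_le_pow_left₀ (abs_nonneg _) (myabs lam hl k) ν
    calc Real.exp (-lam) * lam ^ k / Nat.factorial k * |(k:ℝ) - lam| ^ ν
        ≤ Real.exp (-lam) * lam ^ k / Nat.factorial k * ((1+lam) * 2^k) ^ ν := by
          apply mul_le_mul_of_nonneg_left hb; positivity
      _ = (Real.exp (-lam) * (1+lam)^ν) * ((lam * 2^ν)^k / Nat.factorial k) := by
          rw [mul_pow, mul_pow, ← pow_mul, ← pow_mul]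
          ring_nf

lemma mu_zero (lam : ℝ) : poissonCentralMoment 0 lam = 1 := by
  unfold poissonCentralMoment
  simp only [pow_zero, mul_one]
  have : ∀ k : ℕ, Real.exp (-lam) * lam ^ k / Nat.factorial k
      = Real.exp (-lam) * (lam ^ k / Nat.factorial k) := by intro k; ring
  simp only [this]
  rw [tsum_mul_left, exp_tsum, ← Real.exp_add]
  simp

lemma mu_rec (lam : ℝ) (hl : 0 ≤ lam) (ν : ℕ) :
    poissonCentralMoment (ν+1) lam
      = lam * ∑ r ∈ Finset.range ν, (ν.choose r : ℝ) * poissonCentralMoment r lam := by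
  classical
  set w : ℕ → ℝ := fun k => Real.exp (-lam) * lam ^ k / Nat.factorial k with hw
  have hsum : ∀ m : ℕ, Summable (fun k : ℕ => w k * ((k : ℝ) - lam) ^ m) :=
    fun m => summable_f lam hl m
  set F : ℕ → ℝ := fun k => w k * k * ((k : ℝ) - lam) ^ ν with hF
  have hFeq : ∀ k, F k = w k * ((k:ℝ) - lam) ^ (ν+1) + lam * (w k * ((k:ℝ) - lam) ^ ν) := by
    intro k; simp only [hF, pow_succ]; ring
  have hFsum : Summable F := by
    rw [show F = fun k => w k * ((k:ℝ) - lam) ^ (ν+1) + lam * (w k * ((k:ℝ) - lam) ^ ν)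
      from funext hFeq]
    exact (hsum (ν+1)).add ((hsum ν).mul_left lam)
  -- μ_{ν+1} = ∑' F - lam * μ_ν
  have key1 : poissonCentralMoment (ν+1) lam = (∑' k, F k) - lam * poissonCentralMoment ν lam := by
    unfold poissonCentralMoment
    rw [← tsum_mul_left, ← Summable.tsum_sub hFsum ((hsum ν).mul_left lam)]
    congr 1; ext k; rw [hFeq k]; ring
  -- shift the sum
  have hF0 : F 0 = 0 := by simp [hF]
  have hFshift : ∀ k : ℕ, F (k+1) = lam * (w k * (((k:ℝ) - lam) + 1) ^ ν) := by
    intro k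
    simp only [hF, hw, Nat.factorial_succ, Nat.cast_mul, Nat.cast_add, Nat.cast_one]
    have hk1 : ((k:ℝ) + 1) ≠ 0 := by positivity
    field_simp
    ring
  have key2 : (∑' k, F k) = ∑' k : ℕ, lam * (w k * (((k:ℝ) - lam) + 1) ^ ν) := by
    rw [Summable.tsum_eq_zero_add hFsum, hF0, zero_add]
    exact tsum_congr hFshift
  -- binomial expansion
  have hbin : ∀ k : ℕ, lam * (w k * (((k:ℝ) - lam) + 1) ^ ν)
      = ∑ r ∈ Finset.range (ν+1), lam * (ν.choose r : ℝ) * (w k * ((k:ℝ) - lam) ^ r) := by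
    intro k
    rw [add_pow]
    rw [Finset.mul_sum, Finset.mul_sum]
    refine Finset.sum_congr rfl fun r hr => by ring
  have key3 : (∑' k, F k)
      = ∑ r ∈ Finset.range (ν+1), lam * (ν.choose r : ℝ) * poissonCentralMoment r lam := by
    rw [key2, tsum_congr hbin, Summable.tsum_finsetSum (fun r _ => ((hsum r).mul_left _))]
    exact Finset.sum_congr rfl fun r _ => by rw [tsum_mul_left]; rfl
  rw [key1, key3, Finset.sum_range_succ]
  unfold poissonCentralMoment
  simp only [Nat.choose_self, Nat.cast_one, mul_one]
  rw [Finset.mul_sum, add_sub_cancel_right]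
  exact Finset.sum_congr rfl fun r _ => by ring

open Polynomial in
section

noncomputable def pcmPoly : ℕ → Polynomial ℚ
  | 0 => 1
  | (ν+1) => Polynomial.X * ∑ r ∈ (Finset.range ν).attach,
      (Nat.choose ν r.1 : ℚ) • pcmPoly r.1
decreasing_by exact Nat.lt_succ_of_lt (Finset.mem_range.mp r.2)

lemma pcmPoly_succ (ν : ℕ) : pcmPoly (ν+1)
    = Polynomial.X * ∑ r ∈ Finset.range ν, (Nat.choose ν r : ℚ) • pcmPoly r := by
  rw [pcmPoly]
  rw [Finset.sum_attach (Finset.range ν) (fun r => (Nat.choose ν r : ℚ) • pcmPoly r)]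

lemma pcmPoly_zero : pcmPoly 0 = 1 := by rw [pcmPoly]

lemma pcmPoly_coeff_zero (ν : ℕ) (hν : 1 ≤ ν) : (pcmPoly ν).coeff 0 = 0 := by
  match ν with
  | (ν+1) =>
    rw [pcmPoly_succ]
    simp [Polynomial.mul_coeff_zero]

lemma pcmPoly_coeff_succ (ν l : ℕ) : (pcmPoly (ν+1)).coeff (l+1)
    = ∑ r ∈ Finset.range ν, (Nat.choose ν r : ℚ) * (pcmPoly r).coeff l := by
  rw [pcmPoly_succ, Polynomial.coeff_X_mul, Polynomial.finset_sum_coeff]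
  exact Finset.sum_congr rfl fun r _ => by rw [Polynomial.coeff_smul, smul_eq_mul]

lemma pcmPoly_coeff_nonneg (ν : ℕ) : ∀ l, 0 ≤ (pcmPoly ν).coeff l := by
  induction ν using Nat.strong_induction_on with
  | _ ν ih =>
    match ν with
    | 0 => intro l; rw [pcmPoly_zero]; by_cases h : l = 0 <;> simp [Polynomial.coeff_one, h]
    | (ν+1) =>
      intro l
      match l with
      | 0 => rw [pcmPoly_coeff_zero _ (by omega)]
      | (l+1) =>
        rw [pcmPoly_coeff_succ]
        exact Finset.sum_nonneg fun r hr => mul_nonneg (by positivity)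
          (ih r (by simp at hr; omega) l)

lemma pcmPoly_coeff_vanish (ν : ℕ) : ∀ l, ν < 2 * l → (pcmPoly ν).coeff l = 0 := by
  induction ν using Nat.strong_induction_on with
  | _ ν ih =>
    match ν with
    | 0 => intro l hl; rw [pcmPoly_zero, Polynomial.coeff_one]; simp; omega
    | (ν+1) =>
      intro l hl
      match l with
      | 0 => omega
      | (l+1) =>
        rw [pcmPoly_coeff_succ]
        refine Finset.sum_eq_zero fun r hr => ?_
        simp only [Finset.mem_range] at hr
        rcases Nat.eq_zero_or_pos r with h0 | hpos
        · subst h0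
          rw [pcmPoly_zero]
          rw [Polynomial.coeff_one]
          have : l ≠ 0 := by omega
          simp [this]
        · rw [ih r (by omega) l (by omega), mul_zero]

lemma pcmPoly_coeff_pos (ν : ℕ) : ∀ l, 1 ≤ l → 2 * l ≤ ν → 0 < (pcmPoly ν).coeff l := by
  induction ν using Nat.strong_induction_on with
  | _ ν ih =>
    match ν with
    | 0 => intro l hl h2; omega
    | (ν+1) =>
      intro l hl h2
      match l with
      | 0 => omega
      | (l+1) =>
        rw [pcmPoly_coeff_succ]
        have hmem : 2 * l ∈ Finset.range ν := by simp; omega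
        refine Finset.sum_pos' (fun r hr => mul_nonneg (by positivity)
          (pcmPoly_coeff_nonneg r l)) ⟨2 * l, hmem, ?_⟩
        have hcoeff : 0 < (pcmPoly (2*l)).coeff l := by
          rcases Nat.eq_zero_or_pos l with h0 | hpos
          · subst h0; simp [pcmPoly_zero]
          · exact ih (2*l) (by omega) l hpos (le_refl _)
        have hchoose : 0 < (ν.choose (2*l) : ℚ) := by
          exact_mod_cast Nat.choose_pos (by omega)
        positivity

lemma fact_ge_two_mul_pow (n : ℕ) : 2 * 3^n ≤ (n+2).factorial := by
  induction n with
  | zero => simp [Nat.factorial]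
  | succ n ih =>
    have : (n+3).factorial = (n+3) * (n+2).factorial := rfl
    rw [this]
    calc 2 * 3^(n+1) = 3 * (2 * 3^n) := by ring
    _ ≤ 3 * (n+2).factorial := by omega
    _ ≤ (n+3) * (n+2).factorial := by
        exact Nat.mul_le_mul_right _ (by omega)

lemma sum_inv_fact_aux (k : ℕ) :
    ∑ m ∈ Finset.range k, (1:ℚ)/(Nat.factorial (m+2)) ≤ 3/4 - (3/4) * (1/3)^k := by
  induction k with
  | zero => norm_num
  | succ n ih =>
    rw [Finset.sum_range_succ]
    have h1 : (1:ℚ)/(Nat.factorial (n+2)) ≤ (1/2) * (1/3)^n := by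
      rw [div_le_iff₀ (by positivity)]
      have h2 : (2:ℚ) * 3^n ≤ (Nat.factorial (n+2)) := by
        exact_mod_cast fact_ge_two_mul_pow n
      have h3 : (0:ℚ) < 3^n := by positivity
      rw [show (1:ℚ)/2 * (1/3)^n * (Nat.factorial (n+2))
          = (Nat.factorial (n+2) : ℚ) / (2 * 3^n) by field_simp; rw [← mul_pow]; norm_num]
      rw [le_div_iff₀ (by positivity)]
      linarith
    have : (3:ℚ)/4 - (3/4) * (1/3)^n + (1/2) * (1/3)^n = 3/4 - (3/4) * (1/3)^(n+1) := by
      ring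
    linarith

lemma sum_inv_fact_le (n : ℕ) :
    ∑ m ∈ Finset.range n, (1:ℚ)/(Nat.factorial (m+1)) ≤ 7/4 := by
  match n with
  | 0 => norm_num
  | (n+1) =>
    rw [Finset.sum_range_succ']
    have h1 := sum_inv_fact_aux n
    have h2 : (3:ℚ)/4 * (1/3)^n ≥ 0 := by positivity
    have : (Nat.factorial (0+1) : ℚ) = 1 := by norm_num [Nat.factorial]
    rw [this]
    have h3 : ∑ x ∈ Finset.range n, (1:ℚ)/(Nat.factorial (x+1+1)) ≤ 3/4 - 3/4*(1/3)^n := h1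
    linarith

lemma pcmPoly_bound : ∀ ν : ℕ,
    (∀ l, (pcmPoly ν).coeff l * (Nat.factorial l : ℚ) ≤ (Nat.factorial ν : ℚ)) ∧
    (1 ≤ ν → ∀ l, (pcmPoly ν).coeff l * (Nat.factorial l : ℚ)
        ≤ 7/8 * (Nat.factorial ν : ℚ)) := by
  intro ν
  induction ν using Nat.strong_induction_on with
  | _ ν ih =>
    match ν with
    | 0 =>
      refine ⟨fun l => ?_, by omega⟩
      rw [pcmPoly_zero, Polynomial.coeff_one]
      by_cases h : l = 0
      · subst h; simp [Nat.factorial]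
      · simp [h]
    | (ν+1) =>
      have main : ∀ l, (pcmPoly (ν+1)).coeff l * (Nat.factorial l : ℚ)
          ≤ 7/8 * (Nat.factorial (ν+1) : ℚ) := by
        intro l
        match l with
        | 0 =>
          rw [pcmPoly_coeff_zero _ (by omega), zero_mul]
          positivity
        | (l+1) =>
          by_cases hcase : ν + 1 < 2 * (l+1)
          · rw [pcmPoly_coeff_vanish _ _ hcase, zero_mul]
            positivity
          · push_neg at hcase
            rw [pcmPoly_coeff_succ]
            have hLpos : (0:ℚ) < (Nat.factorial l : ℚ) := by
              exact_mod_cast Nat.factorial_pos l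
            have hterm : ∀ r ∈ Finset.range ν,
                (Nat.choose ν r : ℚ) * (pcmPoly r).coeff l
                  ≤ (Nat.factorial ν : ℚ) / ((Nat.factorial (ν - r) : ℚ)
                      * (Nat.factorial l : ℚ)) := by
              intro r hr
              simp only [Finset.mem_range] at hr
              have h1 : (pcmPoly r).coeff l ≤ (Nat.factorial r : ℚ) / (Nat.factorial l : ℚ) := by
                rw [le_div_iff₀ hLpos]
                exact (ih r (by omega)).1 l
              have hc : ((Nat.choose ν r : ℚ)) * (Nat.factorial r : ℚ)
                  * (Nat.factorial (ν - r) : ℚ) = (Nat.factorial ν : ℚ) := by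
                exact_mod_cast congrArg (Nat.cast (R := ℚ))
                  (Nat.choose_mul_factorial_mul_factorial hr.le)
              have hcnn : (0:ℚ) ≤ (Nat.choose ν r : ℚ) := by positivity
              have hNRpos : (0:ℚ) < (Nat.factorial (ν - r) : ℚ) := by
                exact_mod_cast Nat.factorial_pos (ν - r)
              calc (Nat.choose ν r : ℚ) * (pcmPoly r).coeff l
                  ≤ (Nat.choose ν r : ℚ) * ((Nat.factorial r : ℚ) / (Nat.factorial l : ℚ)) :=
                    mul_le_mul_of_nonneg_left h1 hcnn
                _ = (Nat.factorial ν : ℚ) / ((Nat.factorial (ν - r) : ℚ)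
                      * (Nat.factorial l : ℚ)) := by
                    field_simp
                    linear_combination hc
            have hreflect : ∑ r ∈ Finset.range ν, (1:ℚ)/(Nat.factorial (ν - r))
                = ∑ m ∈ Finset.range ν, (1:ℚ)/(Nat.factorial (m+1)) := by
              rw [← Finset.sum_range_reflect (fun j => (1:ℚ)/(Nat.factorial (j+1))) ν]
              refine Finset.sum_congr rfl fun r hr => ?_
              simp only [Finset.mem_range] at hr
              rw [show ν - 1 - r + 1 = ν - r by omega]
            have hq : ∑ r ∈ Finset.range ν, (Nat.choose ν r : ℚ) * (pcmPoly r).coeff l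
                ≤ (Nat.factorial ν : ℚ) / (Nat.factorial l : ℚ) * (7/4) := by
              calc ∑ r ∈ Finset.range ν, (Nat.choose ν r : ℚ) * (pcmPoly r).coeff l
                  ≤ ∑ r ∈ Finset.range ν, (Nat.factorial ν : ℚ)
                      / ((Nat.factorial (ν - r) : ℚ) * (Nat.factorial l : ℚ)) :=
                    Finset.sum_le_sum hterm
                _ = (Nat.factorial ν : ℚ) / (Nat.factorial l : ℚ)
                      * ∑ r ∈ Finset.range ν, (1:ℚ)/(Nat.factorial (ν - r)) := by
                    rw [Finset.mul_sum]
                    refine Finset.sum_congr rfl fun r _ => ?_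
                    rw [mul_one_div, div_div, mul_comm (Nat.factorial l : ℚ)]
                _ ≤ (Nat.factorial ν : ℚ) / (Nat.factorial l : ℚ) * (7/4) := by
                    rw [hreflect]
                    refine mul_le_mul_of_nonneg_left (sum_inv_fact_le ν) (by positivity)
            have hfacts : (Nat.factorial (l+1) : ℚ) = (l+1) * (Nat.factorial l : ℚ) := by
              push_cast [Nat.factorial_succ]; ring
            have hfactν : (Nat.factorial (ν+1) : ℚ) = (ν+1) * (Nat.factorial ν : ℚ) := by
              push_cast [Nat.factorial_succ]; ring
            have hl2 : (2:ℚ) * ((l:ℚ)+1) ≤ (ν:ℚ)+1 := by exact_mod_cast hcase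
            have hνpos : (0:ℚ) < (Nat.factorial ν : ℚ) := by
              exact_mod_cast Nat.factorial_pos ν
            calc (∑ r ∈ Finset.range ν, (Nat.choose ν r : ℚ) * (pcmPoly r).coeff l)
                  * (Nat.factorial (l+1) : ℚ)
                ≤ ((Nat.factorial ν : ℚ) / (Nat.factorial l : ℚ) * (7/4))
                  * (Nat.factorial (l+1) : ℚ) := by
                  refine mul_le_mul_of_nonneg_right hq (by positivity)
              _ = (7/4) * ((l:ℚ)+1) * (Nat.factorial ν : ℚ) := by
                  rw [hfacts]; field_simp
              _ ≤ 7/8 * (Nat.factorial (ν+1) : ℚ) := by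
                  rw [hfactν]
                  nlinarith [hνpos, hl2]
      refine ⟨fun l => ?_, fun _ => main⟩
      have h := main l
      have : (0:ℚ) < (Nat.factorial (ν+1) : ℚ) := by exact_mod_cast Nat.factorial_pos (ν+1)
      linarith

lemma mu_eq_eval (lam : ℝ) (hl : 0 ≤ lam) : ∀ ν,
    poissonCentralMoment ν lam = Polynomial.eval lam ((pcmPoly ν).map (algebraMap ℚ ℝ)) := by
  intro ν
  induction ν using Nat.strong_induction_on with
  | _ ν ih =>
    match ν with
    | 0 => rw [mu_zero, pcmPoly_zero, Polynomial.map_one, Polynomial.eval_one]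
    | (ν+1) =>
      rw [mu_rec lam hl ν, pcmPoly_succ]
      simp only [Polynomial.smul_eq_C_mul]
      rw [Polynomial.map_mul, Polynomial.map_X, Polynomial.map_sum]
      rw [Polynomial.eval_mul, Polynomial.eval_X, Polynomial.eval_finset_sum]
      congr 1
      refine Finset.sum_congr rfl fun r hr => ?_
      simp only [Finset.mem_range] at hr
      rw [Polynomial.map_mul, Polynomial.map_C, Polynomial.eval_mul, Polynomial.eval_C,
        ih r (by omega)]
      norm_num

lemma pcmPoly_natDegree_lt (ν : ℕ) : (pcmPoly ν).natDegree < ν / 2 + 1 := by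
  have : (pcmPoly ν).natDegree ≤ ν / 2 := by
    refine Polynomial.natDegree_le_iff_coeff_eq_zero.mpr fun l hl => ?_
    exact pcmPoly_coeff_vanish ν l (by omega)
  omega

theorem poissonCentralMoment_poly (ν : ℕ) (hν : 2 ≤ ν) :
    ∃ c : ℕ → ℚ,
      (∀ l ∈ Finset.Icc 1 (ν / 2), 0 < c l ∧ c l < 1 / Nat.factorial l) ∧
      ∀ lam : ℝ, 0 < lam →
        poissonCentralMoment ν lam =
          (Nat.factorial ν : ℝ) * ∑ l ∈ Finset.Icc 1 (ν / 2), (c l : ℝ) * lam ^ l := by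
  refine ⟨fun l => (pcmPoly ν).coeff l / (Nat.factorial ν : ℚ), fun l hl => ?_, fun lam hlam => ?_⟩
  · simp only [Finset.mem_Icc] at hl
    have hνpos : (0:ℚ) < (Nat.factorial ν : ℚ) := by exact_mod_cast Nat.factorial_pos ν
    have hlpos : (0:ℚ) < (Nat.factorial l : ℚ) := by exact_mod_cast Nat.factorial_pos l
    have h2l : 2 * l ≤ ν := by
      have := hl.2
      omega
    constructor
    · exact div_pos (pcmPoly_coeff_pos ν l hl.1 h2l) hνpos
    · rw [div_lt_div_iff₀ hνpos hlpos, one_mul]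
      have hb := (pcmPoly_bound ν).2 (by omega) l
      nlinarith [hb, hνpos]
  · rw [mu_eq_eval lam hlam.le ν,
      Polynomial.eval_eq_sum_range' (n := ν / 2 + 1) (by
        have h := pcmPoly_natDegree_lt ν
        calc ((pcmPoly ν).map (algebraMap ℚ ℝ)).natDegree ≤ (pcmPoly ν).natDegree :=
              Polynomial.natDegree_map_le
          _ < ν / 2 + 1 := h) lam]
    rw [Finset.mul_sum, Finset.sum_range_succ']
    have h0 : ((pcmPoly ν).map (algebraMap ℚ ℝ)).coeff 0 * lam ^ 0 = 0 := by
      rw [Polynomial.coeff_map, pcmPoly_coeff_zero ν (by omega)]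
      simp
    rw [h0, add_zero]
    have hbij : ∑ l ∈ Finset.Icc 1 (ν / 2),
          (Nat.factorial ν : ℝ) * (((pcmPoly ν).coeff l / (Nat.factorial ν : ℚ) : ℚ) : ℝ) * lam ^ l
        = ∑ i ∈ Finset.range (ν / 2),
          ((pcmPoly ν).map (algebraMap ℚ ℝ)).coeff (i + 1) * lam ^ (i + 1) := by
      rw [show Finset.Icc 1 (ν / 2) = Finset.map ⟨fun i => i + 1, fun a b h => by simpa using h⟩
          (Finset.range (ν / 2)) by
        ext x
        simp only [Finset.mem_map, Finset.mem_range, Finset.mem_Icc,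
          Function.Embedding.coeFn_mk]
        constructor
        · rintro ⟨h1, h2⟩; exact ⟨x - 1, by omega, by show x - 1 + 1 = x; omega⟩
        · rintro ⟨a, ha, rfl⟩; show 1 ≤ a + 1 ∧ a + 1 ≤ ν / 2; omega]
      rw [Finset.sum_map]
      refine Finset.sum_congr rfl fun i _ => ?_
      simp only [Function.Embedding.coeFn_mk, Polynomial.coeff_map]
      have hνne : ((Nat.factorial ν : ℚ) : ℝ) ≠ 0 := by
        exact_mod_cast Nat.cast_ne_zero.mpr (Nat.factorial_ne_zero ν)
      push_cast
      field_simp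
      rfl
    rw [← hbij]
    refine Finset.sum_congr rfl fun l _ => by ring
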